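/- arXiv:2502.00141 — 2 statements merged into one kernel-verified Lean document; each statement's English description precedes it below -/
import Mathlib

section
/- The ideal 𝔮 = (2, 1+ω) of 𝓞_K, where K = ℚ(√−17), satisfies 𝔮² = (2) (so 2 is ramified in K), and the ideal class of 𝔮 has order exactly 2 in the class group Cl(K); in particular this class is a square in Cl(K). -/
open NumberField nonZeroDivisors

open Polynomial Module

set_option maxHeartbeats 2000000 in
set_option synthInstance.maxHeartbeats 400000 in
/-- The ideal `𝔮 = (2, 1+ω)` of `𝓞_K`, `K = ℚ(√−17)`, satisfies `𝔮² = (2)` (so `2` ramifies),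
and its ideal class has order exactly `2` in the class group; in particular this class is a
square in `Cl(K)`. -/
theorem ideal_two_one_add_omega_order_two
    (K : Type*) [Field K] [NumberField K] (ω : K)
    (hω : ω ^ 2 = -17) (hK : Algebra.adjoin ℚ {ω} = ⊤)
    (ζ : 𝓞 K) (hζ : (ζ : K) = ω)
    (Q : Ideal (𝓞 K)) (hQ : Q = Ideal.span {(2 : 𝓞 K), 1 + ζ})
    (hQ0 : Q ∈ (Ideal (𝓞 K))⁰) :
    Q ^ 2 = Ideal.span {(2 : 𝓞 K)} ∧
      orderOf (ClassGroup.mk0 ⟨Q, hQ0⟩) = 2 ∧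
      IsSquare (ClassGroup.mk0 ⟨Q, hQ0⟩) := by
  -- `ζ ^ 2 = -17` in the ring of integers
  have hζ2 : ζ ^ 2 = -17 := by
    apply RingOfIntegers.coe_injective
    show algebraMap (𝓞 K) K (ζ ^ 2) = algebraMap (𝓞 K) K (-17)
    rw [map_pow, map_neg, show algebraMap (𝓞 K) K ζ = ω from hζ, hω]
    exact (neg_inj.mpr (map_ofNat (algebraMap (𝓞 K) K) 17)).symm
  have h2Q : (2 : 𝓞 K) ∈ Q := hQ ▸ Ideal.subset_span (by simp)
  have hzQ : 1 + ζ ∈ Q := hQ ▸ Ideal.subset_span (by simp)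
  -- Part 1 : `Q ^ 2 = (2)`
  have hQ2 : Q ^ 2 = Ideal.span {(2 : 𝓞 K)} := by
    apply le_antisymm
    · rw [pow_two, hQ, Ideal.mul_le]
      intro r hr s hs
      rw [Ideal.mem_span_pair] at hr hs
      obtain ⟨a, b, rfl⟩ := hr
      obtain ⟨c, d, rfl⟩ := hs
      rw [Ideal.mem_span_singleton]
      exact ⟨2*(a*c) + (a*d+b*c)*(1+ζ) + b*d*(ζ-8), by linear_combination (b*d) * hζ2⟩
    · rw [Ideal.span_le, Set.singleton_subset_iff, SetLike.mem_coe, pow_two]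
      have e : (2:𝓞 K) = 2*(1+ζ) - (1+ζ)*(1+ζ) - 4*(2*2) := by linear_combination hζ2
      rw [e]
      exact sub_mem (sub_mem (Ideal.mul_mem_mul h2Q hzQ) (Ideal.mul_mem_mul hzQ hzQ))
        (Ideal.mul_mem_left _ 4 (Ideal.mul_mem_mul h2Q h2Q))
  -- Part 2 : a power basis `1, ω` for `K` over `ℚ`, and norm/trace formulas
  have hωint : IsIntegral ℚ ω :=
    ⟨X ^ 2 + C (17:ℚ), monic_X_pow_add_C _ two_ne_zero, by
      simp only [eval₂_add, eval₂_pow, eval₂_X, eval₂_C]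
      rw [hω]; norm_num⟩
  have hdeg : (minpoly ℚ ω).natDegree = 2 := by
    have hdvd : minpoly ℚ ω ∣ X ^ 2 + C (17:ℚ) := minpoly.dvd ℚ ω (by
      simp only [map_add, map_pow, aeval_X, aeval_C]
      rw [hω]; norm_num)
    have hle := Polynomial.natDegree_le_of_dvd hdvd (monic_X_pow_add_C _ two_ne_zero).ne_zero
    rw [natDegree_X_pow_add_C] at hle
    have h1 : (minpoly ℚ ω).natDegree ≠ 1 := by
      intro h
      obtain ⟨r, hr⟩ := minpoly.natDegree_eq_one_iff.mp h
      have h2 : algebraMap ℚ K (r ^ 2) = algebraMap ℚ K (-17) := by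
        rw [map_pow, hr, hω, map_neg, map_ofNat]
      have h3 : r ^ 2 = -17 := (algebraMap ℚ K).injective h2
      nlinarith [sq_nonneg r]
    have h0 : 0 < (minpoly ℚ ω).natDegree := minpoly.natDegree_pos hωint
    omega
  let e : Algebra.adjoin ℚ ({ω} : Set K) ≃ₐ[ℚ] K :=
    (Subalgebra.equivOfEq _ _ hK).trans Subalgebra.topEquiv
  let pb : PowerBasis ℚ K := (Algebra.adjoin.powerBasis hωint).map e
  have hgen : pb.gen = ω := rfl
  have hdim : pb.dim = 2 := hdeg
  let B : Basis (Fin 2) ℚ K := pb.basis.reindex (finCongr hdim)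
  have hB0 : B 0 = 1 := by
    rw [show B 0 = pb.basis ((finCongr hdim).symm 0) from Basis.reindex_apply _ _ 0,
      pb.basis_eq_pow]
    simp [hgen]
  have hB1 : B 1 = ω := by
    rw [show B 1 = pb.basis ((finCongr hdim).symm 1) from Basis.reindex_apply _ _ 1,
      pb.basis_eq_pow]
    simp [hgen]
  have hfin : finrank ℚ K = 2 := by rw [pb.finrank, hdim]
  have hval : ∀ c d : ℚ, B.repr (c • B 0 + d • B 1) 0 = c ∧ B.repr (c • B 0 + d • B 1) 1 = d := by
    intro c d
    rw [map_add, map_smul, map_smul, B.repr_self, B.repr_self]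
    constructor <;> simp
  have hnorm : ∀ x : K, Algebra.norm ℚ x = (B.repr x 0)^2 + 17*(B.repr x 1)^2 := by
    intro x
    have hx : x = B.repr x 0 • B 0 + B.repr x 1 • B 1 := by
      have := B.sum_repr x
      rw [Fin.sum_univ_two] at this
      exact this.symm
    set a := B.repr x 0 with ha
    set b := B.repr x 1 with hb
    have hx0 : x * B 0 = a • B 0 + b • B 1 := by rw [hB0, mul_one, hx, hB0]
    have hx1 : x * B 1 = (-17*b) • B 0 + a • B 1 := by
      rw [hx, hB0, hB1]
      simp only [Algebra.smul_def, map_mul, map_neg, map_ofNat, mul_one]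
      linear_combination (algebraMap ℚ K b) * hω
    rw [Algebra.norm_eq_matrix_det B, Matrix.det_fin_two]
    simp only [Algebra.leftMulMatrix_eq_repr_mul]
    rw [hx0, hx1, (hval a b).1, (hval a b).2, (hval (-17*b) a).1, (hval (-17*b) a).2]
    ring
  have htr : ∀ x : K, Algebra.trace ℚ K x = 2 * (B.repr x 0) := by
    intro x
    have hx : x = B.repr x 0 • B 0 + B.repr x 1 • B 1 := by
      have := B.sum_repr x
      rw [Fin.sum_univ_two] at this
      exact this.symm
    set a := B.repr x 0 with ha
    set b := B.repr x 1 with hb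
    have hx0 : x * B 0 = a • B 0 + b • B 1 := by rw [hB0, mul_one, hx, hB0]
    have hx1 : x * B 1 = (-17*b) • B 0 + a • B 1 := by
      rw [hx, hB0, hB1]
      simp only [Algebra.smul_def, map_mul, map_neg, map_ofNat, mul_one]
      linear_combination (algebraMap ℚ K b) * hω
    rw [Algebra.trace_eq_matrix_trace B, Matrix.trace_fin_two]
    simp only [Algebra.leftMulMatrix_eq_repr_mul]
    rw [hx0, hx1, (hval a b).1, (hval (-17*b) a).2]
    ring
  -- Part 3 : `Q` is not principal
  have hnp : ¬ Submodule.IsPrincipal Q := by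
    have habs : Ideal.absNorm Q = 2 := by
      have h4 : Ideal.absNorm Q ^ 2 = 2 ^ 2 := by
        rw [← map_pow, hQ2, Ideal.absNorm_span_singleton]
        have h24 : Algebra.norm ℤ (2 : 𝓞 K) = 4 := by
          have hc : (Algebra.norm ℤ (2 : 𝓞 K) : ℚ) = ((4:ℤ) : ℚ) := by
            rw [Algebra.coe_norm_int]
            rw [show ((2:𝓞 K):K) = algebraMap ℚ K 2 by
              rw [RingOfIntegers.coe_eq_algebraMap, map_ofNat, map_ofNat]]
            rw [Algebra.norm_algebraMap, hfin]
            norm_num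
          exact_mod_cast hc
        rw [h24]; rfl
      exact Nat.pow_left_injective two_ne_zero h4
    rintro ⟨α, hα⟩
    have hα' : Q = Ideal.span {α} := hα
    have hnormα : (Algebra.norm ℤ α).natAbs = 2 := by
      rw [hα', Ideal.absNorm_span_singleton] at habs; exact habs
    have hratnorm : Algebra.norm ℚ (α : K) = 2 := by
      have h := Algebra.coe_norm_int α
      rcases Int.natAbs_eq_iff.mp hnormα with h2 | h2
      · rw [← h, h2]; norm_num
      · exfalso
        rw [h2] at h
        have h3 : Algebra.norm ℚ (α : K) = -2 := by rw [← h]; norm_num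
        rw [hnorm] at h3
        nlinarith [sq_nonneg (B.repr (α:K) 0), sq_nonneg (B.repr (α:K) 1)]
    rw [hnorm] at hratnorm
    set A := B.repr (α:K) 0
    set Bb := B.repr (α:K) 1
    obtain ⟨t, ht⟩ : ∃ t : ℤ, (t:ℚ) = 2 * A := by
      refine ⟨Algebra.trace ℤ (𝓞 K) α, ?_⟩
      rw [show ((Algebra.trace ℤ (𝓞 K) α : ℤ) : ℚ) = Algebra.trace ℚ K (α : K) from
        Algebra.coe_trace_int α]
      exact htr _
    have he : (t:ℚ)^2 + 68*Bb^2 = 8 := by rw [ht]; linear_combination 4 * hratnorm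
    have hb2 : (34*Bb)^2 = ((136 - 17*t^2 : ℤ) : ℚ) := by push_cast; linear_combination 17 * he
    have hint : IsIntegral ℤ (34*Bb) :=
      ⟨X^2 - C (136 - 17*t^2 : ℤ), monic_X_pow_sub_C _ two_ne_zero, by
        simp only [eval₂_sub, eval₂_pow, eval₂_X, eval₂_C]
        rw [hb2]; simp⟩
    obtain ⟨m, hm⟩ := IsIntegrallyClosed.isIntegral_iff.mp hint
    have hm2 : m^2 = 136 - 17*t^2 := by
      have : ((m:ℚ))^2 = ((136 - 17*t^2 : ℤ) : ℚ) := by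
        rw [show ((m:ℤ):ℚ) = algebraMap ℤ ℚ m from rfl, hm]; exact hb2
      exact_mod_cast this
    have ht8 : t^2 ≤ 8 := by
      have : (t:ℚ)^2 ≤ 8 := by nlinarith [sq_nonneg Bb]
      exact_mod_cast this
    have htl : -2 ≤ t := by nlinarith
    have htu : t ≤ 2 := by nlinarith
    have hm136 : m^2 ≤ 136 := by nlinarith [sq_nonneg t]
    have hml : -12 ≤ m := by nlinarith [sq_nonneg (m+12)]
    have hmu : m ≤ 12 := by nlinarith [sq_nonneg (m-12)]
    interval_cases t <;> interval_cases m <;> norm_num at hm2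
  -- Part 4 : the class group statements
  have hQ2' : Q * Q = Ideal.span {(2 : 𝓞 K)} := by rw [← pow_two]; exact hQ2
  set P : Ideal (𝓞 K) := Ideal.span {(3 : 𝓞 K), 1 + ζ} with hP
  have h3P : (3 : 𝓞 K) ∈ P := Ideal.subset_span (by simp)
  have hzP : 1 + ζ ∈ P := Ideal.subset_span (by simp)
  have hP0 : P ∈ (Ideal (𝓞 K))⁰ := by
    refine mem_nonZeroDivisors_of_ne_zero ?_
    intro h
    rw [h] at h3P
    have h30 : (3 : 𝓞 K) = 0 := by simpa using h3P
    exact absurd h30 (by norm_num)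
  have hPPQ : P * P * Q = Ideal.span {1 + ζ} := by
    apply le_antisymm
    · rw [hP, hQ, Ideal.span_mul_span', Ideal.span_mul_span', Ideal.span_le]
      rintro x ⟨y, hy, z, hz, rfl⟩
      obtain ⟨u, hu, v, hv, rfl⟩ := hy
      simp only [Set.mem_insert_iff, Set.mem_singleton_iff] at hu hv hz
      rw [SetLike.mem_coe, Ideal.mem_span_singleton]
      rcases hu with rfl|rfl <;> rcases hv with rfl|rfl <;> rcases hz with rfl|rfl <;>
        first
          | (refine ⟨1 - ζ, ?_⟩; linear_combination hζ2)
          | (refine ⟨9, ?_⟩; ring1)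
          | (refine ⟨6, ?_⟩; ring1)
          | (refine ⟨3*(1+ζ), ?_⟩; ring1)
          | (refine ⟨2*(1+ζ), ?_⟩; ring1)
          | (refine ⟨(1+ζ)*(1+ζ), ?_⟩; ring1)
    · rw [Ideal.span_le, Set.singleton_subset_iff, SetLike.mem_coe]
      have e2 : (1+ζ) = (1+ζ)*(1+ζ)*2 + 2*(3*3*2) - 3*3*(1+ζ) + 3*(1+ζ)*2 := by
        linear_combination (-2 : 𝓞 K) * hζ2
      rw [e2]
      exact add_mem (sub_mem (add_mem
        (Ideal.mul_mem_mul (Ideal.mul_mem_mul hzP hzP) h2Q)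
        (Ideal.mul_mem_left _ 2 (Ideal.mul_mem_mul (Ideal.mul_mem_mul h3P h3P) h2Q)))
        (Ideal.mul_mem_mul (Ideal.mul_mem_mul h3P h3P) hzQ))
        (Ideal.mul_mem_mul (Ideal.mul_mem_mul h3P hzP) h2Q)
  have hq2 : (ClassGroup.mk0 (⟨Q, hQ0⟩ : (Ideal (𝓞 K))⁰)) ^ 2 = 1 := by
    rw [pow_two, ← MonoidHom.map_mul]
    exact (ClassGroup.mk0_eq_one_iff (mul_mem hQ0 hQ0)).mpr ⟨⟨2, by exact hQ2'⟩⟩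
  have hqne : ClassGroup.mk0 (⟨Q, hQ0⟩ : (Ideal (𝓞 K))⁰) ≠ 1 :=
    fun h => hnp ((ClassGroup.mk0_eq_one_iff hQ0).mp h)
  have horder : orderOf (ClassGroup.mk0 (⟨Q, hQ0⟩ : (Ideal (𝓞 K))⁰)) = 2 := by
    haveI : Fact (Nat.Prime 2) := ⟨Nat.prime_two⟩
    exact orderOf_eq_prime hq2 hqne
  have h1 : ClassGroup.mk0 (⟨P, hP0⟩ : (Ideal (𝓞 K))⁰) * ClassGroup.mk0 ⟨P, hP0⟩ *
      ClassGroup.mk0 (⟨Q, hQ0⟩ : (Ideal (𝓞 K))⁰) = 1 := by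
    rw [← MonoidHom.map_mul, ← MonoidHom.map_mul]
    exact (ClassGroup.mk0_eq_one_iff (mul_mem (mul_mem hP0 hP0) hQ0)).mpr
      ⟨⟨1 + ζ, by exact hPPQ⟩⟩
  exact ⟨hQ2, horder, ⟨(ClassGroup.mk0 ⟨P, hP0⟩)⁻¹, by
    rw [← mul_inv]; exact (inv_eq_of_mul_eq_one_right h1).symm⟩⟩
end

section
/- The quadratic extension L = ℚ(√−17, √−1) of K = ℚ(√−17) is unramified at all finite primes of K: the relative different ideal of 𝓞_L over 𝓞_K is the unit ideal (equivalently, every nonzero prime ideal of 𝓞_K has ramification index 1 in 𝓞_L). -/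
set_option maxHeartbeats 1000000

open NumberField nonZeroDivisors Polynomial

theorem aux_mem_different
    (K : Type*) [Field K] [NumberField K]
    (L : Type*) [Field L] [NumberField L] [Algebra K L]
    (x : 𝓞 L) (hx : Algebra.adjoin K {algebraMap (𝓞 L) L x} = ⊤)
    (p : Polynomial (𝓞 K)) (hm : p.Monic) (hd : p.natDegree = 2)
    (hdeg : Module.finrank K L = 2)
    (hroot : Polynomial.aeval x p = 0) :
    Polynomial.aeval x (Polynomial.derivative p) ∈ differentIdeal (𝓞 K) (𝓞 L) := by
  have hint : IsIntegral (𝓞 K) x := ⟨p, hm, by rwa [← Polynomial.aeval_def]⟩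
  have hdvd : minpoly (𝓞 K) x ∣ p := minpoly.isIntegrallyClosed_dvd hint hroot
  have hKint : IsIntegral K (algebraMap (𝓞 L) L x) := Algebra.IsIntegral.isIntegral _
  have h1 : minpoly K (algebraMap (𝓞 L) L x) = (minpoly (𝓞 K) x).map (algebraMap (𝓞 K) K) :=
    minpoly.isIntegrallyClosed_eq_field_fractions K L hint
  have h2 : (minpoly K (algebraMap (𝓞 L) L x)).natDegree = 2 := by
    rw [← IntermediateField.adjoin.finrank hKint]
    have hT : (IntermediateField.adjoin K {algebraMap (𝓞 L) L x}).toSubalgebra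
        = (⊤ : IntermediateField K L).toSubalgebra := by
      rw [IntermediateField.adjoin_simple_toSubalgebra_of_isAlgebraic hKint.isAlgebraic, hx,
        IntermediateField.top_toSubalgebra]
    have hT' : IntermediateField.adjoin K {algebraMap (𝓞 L) L x} = ⊤ :=
      IntermediateField.toSubalgebra_injective hT
    rw [hT', IntermediateField.finrank_top', hdeg]
  have h3 : (minpoly (𝓞 K) x).natDegree = 2 := by
    rwa [h1, Polynomial.natDegree_map_eq_of_injective
      (FaithfulSMul.algebraMap_injective _ _)] at h2
  have heq : minpoly (𝓞 K) x = p :=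
    Polynomial.eq_of_dvd_of_natDegree_le_of_leadingCoeff hdvd (by rw [hd, h3])
      (by rw [(minpoly.monic hint).leadingCoeff, hm.leadingCoeff])
  rw [← heq]
  exact aeval_derivative_mem_differentIdeal (𝓞 K) K (L := L) x hx

attribute [local instance] FractionRing.liftAlgebra FractionRing.isScalarTower_liftAlgebra

/-- The quadratic extension `L = K(i)` of `K = ℚ(√−17)` is unramified at all finite primes:
the relative different ideal of `𝓞_L / 𝓞_K` is the unit ideal, equivalently every nonzero
prime of `𝓞_K` has ramification index `1` in `𝓞_L`. -/
theorem genus_field_unramified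
    (K : Type*) [Field K] [NumberField K] (ω : K)
    (hω : ω ^ 2 = -17) (hK : Algebra.adjoin ℚ {ω} = ⊤)
    (L : Type*) [Field L] [NumberField L] [Algebra K L]
    (i : L) (hi : i ^ 2 = -1) (hL : Algebra.adjoin K {i} = ⊤)
    (hdeg : Module.finrank K L = 2) :
    differentIdeal (𝓞 K) (𝓞 L) = ⊤ ∧
      ∀ p : Ideal (𝓞 K), p ≠ ⊥ → p.IsPrime →
        ∀ P : Ideal (𝓞 L), P.IsPrime →
          Ideal.comap (algebraMap (𝓞 K) (𝓞 L)) P = p →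
            Ideal.ramificationIdx' p P = 1 := by
  have hwdef : True := trivial
  set w : L := algebraMap K L ω with hw_def
  have hw : w ^ 2 = -17 := by
    rw [hw_def, ← map_pow, hω, map_neg, map_ofNat]
  set θ : L := (1 + w * i) / 2 with hθdef
  have h2 : (2 : L) ≠ 0 := two_ne_zero
  have hθ2 : θ * 2 = 1 + w * i := by rw [hθdef]; field_simp
  have hθeq : θ ^ 2 - θ - 4 = 0 := by
    have h4 : (θ * 2) ^ 2 - 2 * (θ * 2) - 16 = 0 := by
      rw [hθ2]; linear_combination i ^ 2 * hw - 17 * hi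
    linear_combination h4 / 4
  -- integrality
  have hiInt : i ∈ integralClosure ℤ L := ⟨X ^ 2 + 1, monic_X_pow_add_C 1 two_ne_zero, by
    simp [hi]⟩
  have hwInt : w ∈ integralClosure ℤ L := ⟨X ^ 2 + C 17, monic_X_pow_add_C 17 two_ne_zero, by
    simp [hw]⟩
  have hθInt : θ ∈ integralClosure ℤ L := ⟨X ^ 2 - X - C 4, by monicity!, by
    simpa using hθeq⟩
  set iO : 𝓞 L := ⟨i, hiInt⟩ with hiOdef
  set wO : 𝓞 L := ⟨w, hwInt⟩ with hwOdef
  set θO : 𝓞 L := ⟨θ, hθInt⟩ with hθOdef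
  -- first generator: i, with minimal polynomial X^2 + 1
  have hmem1 : Polynomial.aeval iO (Polynomial.derivative (X ^ 2 + 1 : Polynomial (𝓞 K)))
      ∈ differentIdeal (𝓞 K) (𝓞 L) := by
    refine aux_mem_different K L iO hL _ (monic_X_pow_add_C 1 two_ne_zero) (by compute_degree!)
      hdeg ?_
    ext
    rw [map_add, map_pow, Polynomial.aeval_X, map_one]
    push_cast
    simp [hiOdef, hi]
  -- second generator: θ, with minimal polynomial X^2 - X - 4
  have hadjθ : Algebra.adjoin K {θ} = ⊤ := by
    rw [eq_top_iff, ← hL]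
    have hθmem : θ ∈ Algebra.adjoin K {θ} := Algebra.self_mem_adjoin_singleton K θ
    have h2mem : (2 : L) ∈ Algebra.adjoin K {θ} := by
      have := Subalgebra.algebraMap_mem (Algebra.adjoin K {θ}) (2 : K)
      rwa [map_ofNat] at this
    have hirep : i = algebraMap K L (-ω / 17) * (θ * 2 - 1) := by
      rw [hθ2]
      have hmap : algebraMap K L (-ω / 17) = -w / 17 := by
        rw [map_div₀, map_neg, map_ofNat]
      rw [hmap]
      field_simp
      linear_combination i * hw
    apply Algebra.adjoin_le
    intro x hx
    rw [Set.mem_singleton_iff] at hx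
    rw [hx, hirep]
    exact mul_mem (Subalgebra.algebraMap_mem _ _)
      (sub_mem (mul_mem hθmem h2mem) (one_mem _))
  have hmem2 : Polynomial.aeval θO (Polynomial.derivative (X ^ 2 - X - C 4 : Polynomial (𝓞 K)))
      ∈ differentIdeal (𝓞 K) (𝓞 L) := by
    refine aux_mem_different K L θO hadjθ _ (by monicity!) (by compute_degree!) hdeg ?_
    ext
    rw [map_sub, map_sub, map_pow, Polynomial.aeval_X]
    push_cast
    simp only [hθOdef, map_sub, map_pow, Polynomial.aeval_X, RingOfIntegers.map_mk, map_ofNat,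
      ← IsScalarTower.algebraMap_apply]
    linear_combination hθeq
  -- coercions of the two derivative values
  set d1 : 𝓞 L := Polynomial.aeval iO
    (Polynomial.derivative (X ^ 2 + 1 : Polynomial (𝓞 K))) with hd1def
  set d2 : 𝓞 L := Polynomial.aeval θO
    (Polynomial.derivative (X ^ 2 - X - C 4 : Polynomial (𝓞 K))) with hd2def
  have hd1L : algebraMap (𝓞 L) L d1 = 2 * i := by
    rw [hd1def]
    have : Polynomial.aeval iO (Polynomial.derivative (X ^ 2 + 1 : Polynomial (𝓞 K)))
        = algebraMap (𝓞 K) (𝓞 L) 2 * iO := by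
      simp
      left
      rw [map_ofNat]
      norm_num
    rw [this, map_mul, ← IsScalarTower.algebraMap_apply, map_ofNat, hiOdef,
      RingOfIntegers.map_mk]
  have hd2L : algebraMap (𝓞 L) L d2 = w * i := by
    rw [hd2def]
    have : Polynomial.aeval θO (Polynomial.derivative (X ^ 2 - X - C 4 : Polynomial (𝓞 K)))
        = algebraMap (𝓞 K) (𝓞 L) 2 * θO - 1 := by
      simp
      left
      rw [map_ofNat]
      norm_num
    rw [this, map_sub, map_mul, ← IsScalarTower.algebraMap_apply, map_ofNat, map_one, hθOdef,
      RingOfIntegers.map_mk]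
    linear_combination 2 * hθ2
  -- the different ideal contains 1
  have hone : differentIdeal (𝓞 K) (𝓞 L) = ⊤ := by
    rw [Ideal.eq_top_iff_one]
    have hcomb := Ideal.sub_mem _ (Ideal.mul_mem_right (-iO * 9) _ hmem1)
      (Ideal.mul_mem_right (wO * iO) _ hmem2)
    have key : d1 * (-iO * 9) - d2 * (wO * iO) = 1 := by
      apply RingOfIntegers.eq_iff.mp
      rw [RingOfIntegers.coe_eq_algebraMap, RingOfIntegers.coe_eq_algebraMap, map_one, map_sub,
        map_mul, map_mul, map_mul, map_mul, hd1L, hd2L, map_neg, map_ofNat, hiOdef, hwOdef,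
        RingOfIntegers.map_mk, RingOfIntegers.map_mk]
      linear_combination -hi - i ^ 2 * hw
    rwa [key] at hcomb
  refine ⟨hone, ?_⟩
  intro p hp hpprime P hPprime hcomap
  haveI : p.IsMaximal := hpprime.isMaximal hp
  have hinj : Function.Injective (algebraMap (𝓞 K) (𝓞 L)) :=
    FaithfulSMul.algebraMap_injective _ _
  have hle : Ideal.map (algebraMap (𝓞 K) (𝓞 L)) p ≤ P :=
    Ideal.map_le_iff_le_comap.mpr hcomap.ge
  have hmapbot : Ideal.map (algebraMap (𝓞 K) (𝓞 L)) p ≠ ⊥ :=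
    (Ideal.map_eq_bot_iff_of_injective hinj).not.mpr hp
  have hne : Ideal.ramificationIdx' p P ≠ 0 :=
    Ideal.IsDedekindDomain.ramificationIdx'_ne_zero hmapbot hPprime hle
  -- separability of the fraction field extension
  haveI : IsLocalization (Algebra.algebraMapSubmonoid (𝓞 L) (𝓞 K)⁰) (FractionRing (𝓞 L)) :=
    IsIntegralClosure.isLocalization _ (FractionRing (𝓞 K)) _ _
  haveI : FiniteDimensional (FractionRing (𝓞 K)) (FractionRing (𝓞 L)) :=
    Module.Finite.of_isLocalization (𝓞 K) (𝓞 L) (𝓞 K)⁰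
  have hdvdtop : P ^ (Ideal.ramificationIdx' p P - 1)
      ∣ differentIdeal (𝓞 K) (𝓞 L) :=
    pow_sub_one_dvd_differentIdeal (𝓞 K) P _ hp
      (Ideal.dvd_iff_le.mpr Ideal.le_pow_ramificationIdx')
  rw [hone] at hdvdtop
  have hPtop : P ^ (Ideal.ramificationIdx' p P - 1) = ⊤ :=
    top_le_iff.mp (Ideal.le_of_dvd hdvdtop)
  by_contra hne1
  have hge2 : 1 ≤ Ideal.ramificationIdx' p P - 1 := by omega
  have : P = ⊤ := by
    rw [eq_top_iff]
    calc (⊤ : Ideal (𝓞 L)) = P ^ (Ideal.ramificationIdx' p P - 1) :=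
          hPtop.symm
      _ ≤ P ^ 1 := Ideal.pow_le_pow_right hge2
      _ = P := pow_one P
  exact hPprime.ne_top this
end
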